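/- Free groups are Howson: if H1 and H2 are finitely generated subgroups of a free group F, then the intersection H1 ∩ H2 is finitely generated. -/

import Mathlib

open FreeGroup

namespace HowsonAux

variable {α : Type} [DecidableEq α]



variable {α : Type} [DecidableEq α]

/-- The set of prefixes of reduced words of elements of `H`. -/

def Pref (H : Subgroup (FreeGroup α)) : Set (List (α × Bool)) :=
  {p | ∃ w, w ∈ H ∧ p <+: w.toWord}

/-- The right coset `H · (mk p)`, encoded as the left coset `(mk p)⁻¹ H`. -/

def vmap (H : Subgroup (FreeGroup α)) (p : List (α × Bool)) : FreeGroup α ⧸ H :=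
  QuotientGroup.mk (FreeGroup.mk p)⁻¹

lemma vmap_eq_iff {H : Subgroup (FreeGroup α)} {p q : List (α × Bool)} :
    vmap H p = vmap H q ↔ FreeGroup.mk p * (FreeGroup.mk q)⁻¹ ∈ H := by
  rw [vmap, vmap, QuotientGroup.eq, inv_inv]

lemma vmap_append {H : Subgroup (FreeGroup α)} {p q : List (α × Bool)}
    (h : vmap H p = vmap H q) (x : α × Bool) :
    vmap H (p ++ [x]) = vmap H (q ++ [x]) := by
  rw [vmap_eq_iff] at h ⊢
  rw [← FreeGroup.mul_mk, ← FreeGroup.mul_mk, mul_inv_rev]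
  convert h using 1
  group

lemma nil_mem_Pref (H : Subgroup (FreeGroup α)) : [] ∈ Pref H :=
  ⟨1, H.one_mem, List.nil_prefix⟩ --

/-- The set of signed letters occurring in reduced words of elements of `H`. -/

def Lett (H : Subgroup (FreeGroup α)) : Set (α × Bool) :=
  {x | ∃ w, w ∈ H ∧ x ∈ w.toWord}

/-- one-step lemma: suffixes of the reduced word of `mk [x] * b`. -/

lemma suffix_cons_mul (x : α × Bool) (b : FreeGroup α) (p : List (α × Bool))
    (h : p <:+ (FreeGroup.mk [x] * b).toWord) :
    p <:+ b.toWord ∨ FreeGroup.mk p = FreeGroup.mk [x] * b := by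
  have hw : (FreeGroup.mk [x] * b).toWord = reduce (x :: b.toWord) := by
    conv_lhs => rw [← FreeGroup.mk_toWord (x := b)]
    rw [FreeGroup.mul_mk, FreeGroup.toWord_mk]
    rfl
  rw [reduce.cons, reduce_toWord] at hw
  rcases hb : b.toWord with _ | ⟨hd, tl⟩
  · rw [hb] at hw
    simp only at hw
    rw [hw] at h
    rcases h with ⟨r, hr⟩
    rcases List.append_eq_cons_iff.mp hr with ⟨h1, h2⟩ | ⟨a', h1, h2⟩
    · right
      have hb1 : b = 1 := FreeGroup.toWord_eq_nil_iff.mp hb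
      rw [h2, hb1, mul_one]
    · left
      have hp : p = [] := (List.append_eq_nil_iff.mp h2.symm).2
      exact hp ▸ List.nil_suffix
  · rw [hb] at hw
    simp only at hw
    by_cases hc : x.1 = hd.1 ∧ x.2 = !hd.2
    · rw [if_pos hc] at hw
      left
      rw [hw] at h
      exact h.trans ⟨[hd], rfl⟩
    · rw [if_neg hc] at hw
      rw [hw] at h
      rcases List.suffix_cons_iff.mp h with h' | h'
      · right
        rw [h']
        conv_rhs => rw [← FreeGroup.mk_toWord (x := b)]
        rw [FreeGroup.mul_mk, hb]
        rfl
      · left; exact hb ▸ h'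



variable {α : Type} [DecidableEq α]

lemma invRev_prefix_suffix {p L : List (α × Bool)} (h : p <+: L) :
    invRev p <:+ invRev L :=
  List.reverse_suffix.mpr (h.map _)

lemma prefix_of_invRev_suffix {p L : List (α × Bool)} (h : invRev p <:+ invRev L) :
    p <+: L := by
  have h1 := List.reverse_suffix.mp h
  have h2 := h1.map (fun g : α × Bool => (g.1, !g.2))
  simpa [invRev, Function.comp_def] using h2

-- copy of suffix_cons_mul signature for testing

lemma reduce_cons_self {x : α × Bool} {t : List (α × Bool)}
    (h : reduce (x :: t) = x :: t) : reduce t = t := by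
  rw [reduce.cons] at h
  rcases ht : reduce t with _ | ⟨hd, tl⟩
  · rw [ht] at h
    simp only at h
    have : t = [] := by
      have := h.symm
      rw [List.cons.injEq] at this
      exact this.2
    exact this.symm
  · rw [ht] at h
    simp only at h
    by_cases hc : x.1 = hd.1 ∧ x.2 = !hd.2
    · rw [if_pos hc] at h
      exfalso
      have hlen : (reduce t).length ≤ t.length := FreeGroup.Red.length_le reduce.red
      rw [ht] at hlen
      have : tl.length = t.length + 1 := by rw [h]; simp
      simp [this] at hlen
    · rw [if_neg hc] at h
      rw [List.cons.injEq] at h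
      exact h.2

/-- one-step lemma, prefix version: prefixes of the reduced word of `a * mk [x]`. -/

lemma prefix_mul_single (a : FreeGroup α) (x : α × Bool) (p : List (α × Bool))
    (h : p <+: (a * FreeGroup.mk [x]).toWord) :
    p <+: a.toWord ∨ FreeGroup.mk p = a * FreeGroup.mk [x] := by
  have hx : invRev [x] = [(x.1, !x.2)] := rfl
  have h1 : invRev p <:+ (FreeGroup.mk [(x.1, !x.2)] * a⁻¹).toWord := by
    rw [← hx, ← FreeGroup.inv_mk, ← mul_inv_rev, FreeGroup.toWord_inv]
    exact invRev_prefix_suffix h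
  rcases suffix_cons_mul _ _ _ h1 with h' | h'
  · left
    rw [FreeGroup.toWord_inv] at h'
    exact prefix_of_invRev_suffix h'
  · right
    have h2 := congrArg (fun z => z⁻¹) h'
    simp only [FreeGroup.inv_mk, invRev_invRev, mul_inv_rev, inv_inv] at h2
    have h3 : invRev [(x.1, !x.2)] = [x] := by simp [invRev]
    rw [h2, h3]

/-- Main decomposition lemma: a prefix of the reduced word of `a * b` is either a prefix of
the word of `a`, or `a` times a prefix of the word of `b`. -/

lemma prefix_mul (L : List (α × Bool)) : ∀ (b : FreeGroup α), b.toWord = L →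
    ∀ (a : FreeGroup α) (p : List (α × Bool)), p <+: (a * b).toWord →
      p <+: a.toWord ∨ ∃ q, q <+: b.toWord ∧ FreeGroup.mk p = a * FreeGroup.mk q := by
  induction L with
  | nil =>
    intro b hb a p h
    have hb1 : b = 1 := FreeGroup.toWord_eq_nil_iff.mp hb
    rw [hb1, mul_one] at h
    exact Or.inl h
  | cons x t ih =>
    intro b hb a p h
    have hred : reduce (x :: t) = x :: t := by
      conv_lhs => rw [← hb]
      conv_rhs => rw [← hb]
      exact reduce_toWord b
    have hredt : reduce t = t := reduce_cons_self hred
    have hbt : (FreeGroup.mk t).toWord = t := by rw [FreeGroup.toWord_mk, hredt]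
    have hb2 : b = FreeGroup.mk [x] * FreeGroup.mk t := by
      rw [FreeGroup.mul_mk]
      conv_lhs => rw [← FreeGroup.mk_toWord (x := b), hb]
      rfl
    have h' : p <+: ((a * FreeGroup.mk [x]) * FreeGroup.mk t).toWord := by
      rw [mul_assoc, ← hb2]; exact h
    rcases ih (FreeGroup.mk t) hbt (a * FreeGroup.mk [x]) p h' with h1 | ⟨q, hq, hpq⟩
    · rcases prefix_mul_single a x p h1 with h2 | h2
      · exact Or.inl h2
      · right
        exact ⟨[x], by rw [hb]; exact ⟨t, rfl⟩, h2⟩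
    · right
      refine ⟨x :: q, ?_, ?_⟩
      · rw [hb]
        exact List.cons_prefix_cons.mpr ⟨rfl, hbt ▸ hq⟩
      · rw [hpq, mul_assoc, FreeGroup.mul_mk]
        rfl



variable {α : Type} [DecidableEq α]

lemma mem_closure_of_union_inv {G : Type*} [Group G] {S : Set G} {x : G}
    (hx : x ∈ S ∪ S⁻¹) : x ∈ Subgroup.closure S := by
  rcases hx with hx | hx
  · exact Subgroup.subset_closure hx
  · have : x⁻¹ ∈ S := Set.mem_inv.mp hx
    simpa using (Subgroup.closure S).inv_mem (Subgroup.subset_closure this)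

lemma exists_decomp_list (S : Set (FreeGroup α)) (l : List (FreeGroup α)) :
    (∀ x ∈ l, x ∈ S ∪ S⁻¹) → ∀ p, p <+: l.prod.toWord →
      ∃ u ∈ Subgroup.closure S, ∃ s q, ((s ∈ S ∪ S⁻¹) ∨ s = 1) ∧ q <+: s.toWord ∧
        FreeGroup.mk p = u * FreeGroup.mk q := by
  induction l using List.reverseRecOn with
  | nil =>
    intro _ p hp
    rw [List.prod_nil, FreeGroup.toWord_one] at hp
    have hp0 : p = [] := List.prefix_nil.mp hp
    exact ⟨1, (Subgroup.closure S).one_mem, 1, [], Or.inr rfl, List.nil_prefix,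
      by rw [hp0, one_mul]⟩
  | append_singleton l s ih =>
    intro hl p hp
    rw [List.prod_append, List.prod_singleton] at hp
    rcases prefix_mul s.toWord s rfl l.prod p hp with h1 | ⟨q, hq, hpq⟩
    · exact ih (fun x hx => hl x (List.mem_append_left _ hx)) p h1
    · refine ⟨l.prod, ?_, s, q, Or.inl (hl s (by simp)), hq, hpq⟩
      exact list_prod_mem (fun x hx => mem_closure_of_union_inv
        (hl x (List.mem_append_left _ hx)))

lemma pref_finite (L : List (α × Bool)) : {q | q <+: L}.Finite :=
  Set.Finite.subset (List.finite_toSet L.inits) (fun q hq => (List.mem_inits q L).mpr hq)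

lemma V_finite_of_fg {H : Subgroup (FreeGroup α)} (h : H.FG) :
    (vmap H '' Pref H).Finite := by
  obtain ⟨S, hS⟩ := h
  set SS : Set (FreeGroup α) := (↑S ∪ (↑S)⁻¹) ∪ {1} with hSSdef
  have hSS : SS.Finite :=
    ((S.finite_toSet.union S.finite_toSet.inv).union (Set.finite_singleton 1))
  have hQ : (⋃ s ∈ SS, {q | q <+: FreeGroup.toWord s}).Finite :=
    hSS.biUnion (fun s _ => pref_finite _)
  apply Set.Finite.subset (hQ.image (vmap H))
  rintro _ ⟨p, ⟨w, hw, hpw⟩, rfl⟩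
  have hw' : w ∈ Subgroup.closure (↑S : Set (FreeGroup α)) := by rw [hS]; exact hw
  rw [← Subgroup.mem_toSubmonoid, Subgroup.closure_toSubmonoid] at hw'
  obtain ⟨l, hl, hlp⟩ := Submonoid.exists_list_of_mem_closure hw'
  obtain ⟨u, hu, s, q, hs, hq, hpq⟩ :=
    exists_decomp_list (↑S : Set (FreeGroup α)) l hl p (by rw [hlp]; exact hpw)
  have hsSS : s ∈ SS := by
    rcases hs with hs | rfl
    · exact Or.inl hs
    · exact Or.inr rfl
  refine ⟨q, Set.mem_biUnion hsSS hq, ?_⟩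
  rw [vmap_eq_iff]
  have : FreeGroup.mk q * (FreeGroup.mk p)⁻¹ = u⁻¹ := by rw [hpq]; group
  rw [this]
  exact H.inv_mem (by rw [← hS]; exact hu)

lemma mem_toWord_mul {a b : FreeGroup α} {x : α × Bool} (hx : x ∈ (a * b).toWord) :
    x ∈ a.toWord ∨ x ∈ b.toWord := by
  have := (FreeGroup.toWord_mul_sublist a b).subset hx
  simpa using this

lemma Lett_finite_of_fg {H : Subgroup (FreeGroup α)} (h : H.FG) : (Lett H).Finite := by
  obtain ⟨S, hS⟩ := h
  have key : ∀ l : List (FreeGroup α), ∀ x ∈ l.prod.toWord,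
      ∃ s ∈ l, x ∈ FreeGroup.toWord s := by
    intro l
    induction l with
    | nil => intro x hx; rw [List.prod_nil, FreeGroup.toWord_one] at hx; simp at hx
    | cons a t ih =>
      intro x hx
      rw [List.prod_cons] at hx
      rcases mem_toWord_mul hx with h1 | h1
      · exact ⟨a, by simp, h1⟩
      · obtain ⟨s, hs, hxs⟩ := ih x h1
        exact ⟨s, by simp [hs], hxs⟩
  have hfin : (⋃ s ∈ ((↑S ∪ (↑S)⁻¹) : Set (FreeGroup α)), {x | x ∈ FreeGroup.toWord s}).Finite :=
    (S.finite_toSet.union S.finite_toSet.inv).biUnion (fun s _ => List.finite_toSet _)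
  apply hfin.subset
  rintro x ⟨w, hw, hxw⟩
  rw [← hS, ← Subgroup.mem_toSubmonoid, Subgroup.closure_toSubmonoid] at hw
  obtain ⟨l, hl, hlp⟩ := Submonoid.exists_list_of_mem_closure hw
  obtain ⟨s, hs, hxs⟩ := key l x (by rw [hlp]; exact hxw)
  exact Set.mem_biUnion (hl s hs) hxs



variable {α : Type} [DecidableEq α]

lemma fg_of_finite {H : Subgroup (FreeGroup α)} (hV : (vmap H '' Pref H).Finite)
    (hL : (Lett H).Finite) : H.FG := by
  classical
  set c0 : FreeGroup α ⧸ H := vmap H [] with hc0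
  set ρ : FreeGroup α ⧸ H → List (α × Bool) := fun c =>
    if c = c0 then [] else if h : ∃ p ∈ Pref H, vmap H p = c then h.choose else [] with hρdef
  have hρ0 : ρ c0 = [] := by simp [hρdef]
  have hρ : ∀ p ∈ Pref H, vmap H (ρ (vmap H p)) = vmap H p := by
    intro p hp
    by_cases h : vmap H p = c0
    · rw [h, hρ0]
    · have hex : ∃ q ∈ Pref H, vmap H q = vmap H p := ⟨p, hp, rfl⟩
      simp only [hρdef, if_neg h, dif_pos hex]
      exact hex.choose_spec.2
  set V : Set (FreeGroup α ⧸ H) := vmap H '' Pref H with hVdef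
  set T : Set ((FreeGroup α ⧸ H) × (α × Bool)) :=
    {cx | cx.1 ∈ V ∧ cx.2 ∈ Lett H ∧ vmap H (ρ cx.1 ++ [cx.2]) ∈ V} with hTdef
  have hT : T.Finite := Set.Finite.subset (hV.prod hL) (fun cx hcx => ⟨hcx.1, hcx.2.1⟩)
  set gen : (FreeGroup α ⧸ H) × (α × Bool) → FreeGroup α := fun cx =>
    FreeGroup.mk (ρ cx.1) * FreeGroup.mk [cx.2] *
      (FreeGroup.mk (ρ (vmap H (ρ cx.1 ++ [cx.2]))))⁻¹ with hgendef
  have hGenH : ∀ cx ∈ T, gen cx ∈ H := by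
    rintro ⟨c, x⟩ ⟨hcV, hx, hc'V⟩
    obtain ⟨p2, hp2, hp2e⟩ := hc'V
    have h1 : vmap H (ρ (vmap H (ρ c ++ [x]))) = vmap H (ρ c ++ [x]) := by
      rw [← hp2e]
      exact hρ p2 hp2
    have h2 := vmap_eq_iff.mp h1.symm
    simp only [hgendef]
    rw [FreeGroup.mul_mk]
    exact h2
  have key : ∀ p ∈ Pref H,
      FreeGroup.mk p * (FreeGroup.mk (ρ (vmap H p)))⁻¹ ∈ Subgroup.closure (gen '' T) := by
    intro p
    induction p using List.reverseRecOn with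
    | nil =>
      intro _
      rw [← hc0, hρ0]
      have h1 : FreeGroup.mk ([] : List (α × Bool)) * (FreeGroup.mk ([] : List (α × Bool)))⁻¹ = 1 := by
        group
      rw [h1]
      exact Subgroup.one_mem _
    | append_singleton p x ih =>
      intro hpx
      obtain ⟨w, hw, hpfx⟩ := hpx
      have hp : p ∈ Pref H := ⟨w, hw, (List.prefix_append p [x]).trans hpfx⟩
      have hx : x ∈ Lett H := ⟨w, hw, hpfx.sublist.subset (by simp)⟩
      have hcV : vmap H p ∈ V := ⟨p, hp, rfl⟩
      have heq : vmap H (ρ (vmap H p) ++ [x]) = vmap H (p ++ [x]) := vmap_append (hρ p hp) x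
      have hpx' : p ++ [x] ∈ Pref H := ⟨w, hw, hpfx⟩
      have hc'V : vmap H (ρ (vmap H p) ++ [x]) ∈ V := by
        rw [heq]; exact ⟨p ++ [x], hpx', rfl⟩
      have hmemT : ((vmap H p, x) : (FreeGroup α ⧸ H) × (α × Bool)) ∈ T := ⟨hcV, hx, hc'V⟩
      have hgen : gen (vmap H p, x) ∈ Subgroup.closure (gen '' T) :=
        Subgroup.subset_closure ⟨_, hmemT, rfl⟩
      have hcomb : FreeGroup.mk (p ++ [x]) * (FreeGroup.mk (ρ (vmap H (p ++ [x]))))⁻¹ =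
          (FreeGroup.mk p * (FreeGroup.mk (ρ (vmap H p)))⁻¹) * gen (vmap H p, x) := by
        simp only [hgendef]
        rw [heq, ← FreeGroup.mul_mk]
        group
      rw [hcomb]
      exact Subgroup.mul_mem _ (ih hp) hgen
  have hsub1 : H ≤ Subgroup.closure (gen '' T) := by
    intro w hw
    have hin : w.toWord ∈ Pref H := ⟨w, hw, List.prefix_refl _⟩
    have hkey := key w.toWord hin
    have hvw : vmap H w.toWord = c0 := by
      rw [hc0, vmap_eq_iff, FreeGroup.mk_toWord]
      simpa [← FreeGroup.one_eq_mk] using hw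
    rw [hvw, hρ0] at hkey
    simpa [FreeGroup.mk_toWord, ← FreeGroup.one_eq_mk] using hkey
  have hsub2 : Subgroup.closure (gen '' T) ≤ H := by
    rw [Subgroup.closure_le]
    rintro _ ⟨cx, hcx, rfl⟩
    exact hGenH cx hcx
  rw [Subgroup.fg_iff]
  exact ⟨gen '' T, le_antisymm hsub2 hsub1, hT.image _⟩

lemma howson_free (H1 H2 : Subgroup (FreeGroup α)) (h1 : H1.FG) (h2 : H2.FG) :
    (H1 ⊓ H2).FG := by
  classical
  apply fg_of_finite
  · have hV1 := V_finite_of_fg h1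
    have hV2 := V_finite_of_fg h2
    set ψ : List (α × Bool) → (FreeGroup α ⧸ H1) × (FreeGroup α ⧸ H2) :=
      fun p => (vmap H1 p, vmap H2 p) with hψdef
    have hT : (ψ '' Pref (H1 ⊓ H2)).Finite := by
      apply Set.Finite.subset (hV1.prod hV2)
      rintro _ ⟨p, hp, rfl⟩
      obtain ⟨w, hw, hpw⟩ := hp
      rw [Subgroup.mem_inf] at hw
      exact ⟨⟨p, ⟨w, hw.1, hpw⟩, rfl⟩, ⟨p, ⟨w, hw.2, hpw⟩, rfl⟩⟩
    set r : (FreeGroup α ⧸ H1) × (FreeGroup α ⧸ H2) → List (α × Bool) := fun t =>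
      if h : ∃ p ∈ Pref (H1 ⊓ H2), ψ p = t then h.choose else [] with hrdef
    apply Set.Finite.subset (hT.image (fun t => vmap (H1 ⊓ H2) (r t)))
    rintro _ ⟨p, hp, rfl⟩
    refine ⟨ψ p, ⟨p, hp, rfl⟩, ?_⟩
    have hex : ∃ q ∈ Pref (H1 ⊓ H2), ψ q = ψ p := ⟨p, hp, rfl⟩
    simp only [hrdef, dif_pos hex]
    have hψe := hex.choose_spec.2
    have he1 : vmap H1 hex.choose = vmap H1 p := congrArg Prod.fst hψe
    have he2 : vmap H2 hex.choose = vmap H2 p := congrArg Prod.snd hψe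
    rw [vmap_eq_iff] at he1 he2
    rw [vmap_eq_iff, Subgroup.mem_inf]
    exact ⟨he1, he2⟩
  · exact (Lett_finite_of_fg h1).subset
      (fun x ⟨w, hw, hxw⟩ => ⟨w, (Subgroup.mem_inf.mp hw).1, hxw⟩)

end HowsonAux

theorem free_groups_are_howson
    (F : Type) [Group F] [IsFreeGroup F]
    (H1 H2 : Subgroup F) (h1 : H1.FG) (h2 : H2.FG) :
    (H1 ⊓ H2).FG := by
  classical
  set β := IsFreeGroup.Generators F with hβ
  letI : DecidableEq β := Classical.decEq β
  set e : F ≃* FreeGroup β := IsFreeGroup.toFreeGroup F with he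
  have hmap : ∀ (K : Subgroup F), K.FG → (K.map e.toMonoidHom).FG := by
    rintro K ⟨S, hS⟩
    exact ⟨S.image e, by rw [← hS, Finset.coe_image, MonoidHom.map_closure]; rfl⟩
  have h12 : ((H1 ⊓ H2).map e.toMonoidHom).FG := by
    have hh := HowsonAux.howson_free (H1.map e.toMonoidHom) (H2.map e.toMonoidHom)
      (hmap _ h1) (hmap _ h2)
    rwa [← Subgroup.map_inf H1 H2 e.toMonoidHom e.injective] at hh
  obtain ⟨S, hS⟩ := h12
  refine ⟨S.image e.symm, ?_⟩
  have hcl : Subgroup.closure (↑(S.image e.symm) : Set F) =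
      ((H1 ⊓ H2).map e.toMonoidHom).map e.symm.toMonoidHom := by
    rw [← hS, Finset.coe_image, MonoidHom.map_closure]; rfl
  rw [hcl, Subgroup.map_map]
  have hid : e.symm.toMonoidHom.comp e.toMonoidHom = MonoidHom.id F := by
    ext x; simp
  rw [hid, Subgroup.map_id]
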